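/- Let a, b be positive integers with a ≥ 2b, let G be a graph and let G_v be obtained from G by adding a new vertex v adjacent to exactly one vertex u of G. Then G is free (a,b)-choosable if and only if G_v is free (a,b)-choosable. -/

import Mathlib

/-- An (L,b)-coloring of `G`: each vertex gets a `b`-element subset of its list,
with disjoint sets on adjacent vertices. -/
def IsLbColoring {V : Type*} (G : SimpleGraph V) (L : V → Finset ℤ) (b : ℕ)
    (c : V → Finset ℤ) : Prop :=
  (∀ v, c v ⊆ L v) ∧ (∀ v, (c v).card = b) ∧ ∀ ⦃v w⦄, G.Adj v w → Disjoint (c v) (c w)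

/-- `G` is (a,b)-choosable. -/
def Choosable {V : Type*} (G : SimpleGraph V) (a b : ℕ) : Prop :=
  ∀ L : V → Finset ℤ, (∀ v, (L v).card = a) → ∃ c, IsLbColoring G L b c

/-- `G` is free (a,b)-choosable. -/
def FreeChoosable {V : Type*} (G : SimpleGraph V) (a b : ℕ) : Prop :=
  ∀ L : V → Finset ℤ, (∀ v, (L v).card = a) →
    ∀ v₀ : V, ∀ c₀ : Finset ℤ, c₀ ⊆ L v₀ → c₀.card = b →
      ∃ c, IsLbColoring G L b c ∧ c v₀ = c₀

/-- The cycle `C n` on vertex set `ZMod n`. -/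
def cycleGraph (n : ℕ) : SimpleGraph (ZMod n) :=
  SimpleGraph.fromRel (fun i j => j = i + 1)

/-- The graph obtained from `G` by adding a new leaf (`none`) adjacent to `u`. -/
def addLeaf {V : Type*} (G : SimpleGraph V) (u : V) : SimpleGraph (Option V) :=
  SimpleGraph.fromRel (fun x y =>
    (∃ w z, x = some w ∧ y = some z ∧ G.Adj w z) ∨ (x = none ∧ y = some u))

lemma addLeaf_adj_some {V : Type*} (G : SimpleGraph V) (u : V) (w z : V) :
    (addLeaf G u).Adj (some w) (some z) ↔ G.Adj w z := by
  constructor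
  · rintro ⟨hne, h | h⟩
    · rcases h with (⟨w', z', hw, hz, hadj⟩ | ⟨h, _⟩)
      · cases hw; cases hz; exact hadj
      · simp at h
    · rcases h with (⟨w', z', hw, hz, hadj⟩ | ⟨h, _⟩)
      · cases hw; cases hz; exact hadj.symm
      · simp at h
  · intro h
    exact ⟨by simpa using h.ne, Or.inl (Or.inl ⟨w, z, rfl, rfl, h⟩)⟩

lemma addLeaf_adj_none {V : Type*} (G : SimpleGraph V) (u : V) (x : V) :
    (addLeaf G u).Adj none (some x) ↔ x = u := by
  constructor
  · rintro ⟨hne, h | h⟩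
    · rcases h with (⟨w', z', hw, _, _⟩ | ⟨_, hz⟩)
      · simp at hw
      · exact Option.some_injective _ hz
    · rcases h with (⟨_, _, _, hz, _⟩ | ⟨hz, _⟩) <;> simp at hz
  · rintro rfl
    exact ⟨by simp, Or.inl (Or.inr ⟨rfl, rfl⟩)⟩

/-- for `a ≥ 2b`, `G` is free (a,b)-choosable iff the graph obtained
by adding a leaf to some vertex `u` of `G` is free (a,b)-choosable. -/
theorem stmt1 {V : Type*} (G : SimpleGraph V) (a b : ℕ)
    (ha : 0 < a) (hb : 0 < b) (hab : 2 * b ≤ a) (u : V) :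
    FreeChoosable G a b ↔ FreeChoosable (addLeaf G u) a b := by
  constructor
  · intro hG L hL v₀ c₀ hc₀ hcard
    -- extend a coloring of G to the leaf
    match v₀ with
    | some v₀ =>
      obtain ⟨c, ⟨hsub, hcd, hdisj⟩, hpin⟩ :=
        hG (fun v => L (some v)) (fun v => hL (some v)) v₀ c₀ hc₀ hcard
      have hle : b ≤ (L none \ c u).card := by
        have := Finset.le_card_sdiff (c u) (L none)
        have h1 := hL none
        have h2 := hcd u
        omega
      obtain ⟨cn, hcn_sub, hcn_card⟩ := Finset.exists_subset_card_eq hle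
      refine ⟨fun x => x.elim cn c, ⟨?_, ?_, ?_⟩, hpin⟩
      · rintro (_ | v)
        · exact hcn_sub.trans (Finset.sdiff_subset)
        · exact hsub v
      · rintro (_ | v)
        · exact hcn_card
        · exact hcd v
      · rintro (_ | v) (_ | w) hadj
        · exact absurd rfl hadj.ne
        · rw [addLeaf_adj_none] at hadj
          show Disjoint cn (c w)
          rw [hadj]
          exact Finset.sdiff_disjoint.mono_left hcn_sub
        · rw [show ((addLeaf G u).Adj (some v) none) ↔ (addLeaf G u).Adj none (some v) from
            ⟨SimpleGraph.Adj.symm, SimpleGraph.Adj.symm⟩, addLeaf_adj_none] at hadj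
          show Disjoint (c v) cn
          rw [hadj]
          exact (Finset.sdiff_disjoint.mono_left hcn_sub).symm
        · exact hdisj ((addLeaf_adj_some G u v w).mp hadj)
    | none =>
      -- pin the leaf: first pick a set for u disjoint from c₀
      have hle : b ≤ (L (some u) \ c₀).card := by
        have := Finset.le_card_sdiff c₀ (L (some u))
        have h1 := hL (some u)
        omega
      obtain ⟨cu, hcu_sub, hcu_card⟩ := Finset.exists_subset_card_eq hle
      obtain ⟨c, ⟨hsub, hcd, hdisj⟩, hpin⟩ :=
        hG (fun v => L (some v)) (fun v => hL (some v)) u cu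
          (hcu_sub.trans Finset.sdiff_subset) hcu_card
      refine ⟨fun x => x.elim c₀ c, ⟨?_, ?_, ?_⟩, rfl⟩
      · rintro (_ | v)
        · exact hc₀
        · exact hsub v
      · rintro (_ | v)
        · exact hcard
        · exact hcd v
      · rintro (_ | v) (_ | w) hadj
        · exact absurd rfl hadj.ne
        · rw [addLeaf_adj_none] at hadj
          show Disjoint c₀ (c w)
          rw [hadj, hpin]
          exact Finset.disjoint_sdiff.mono_right hcu_sub
        · rw [show ((addLeaf G u).Adj (some v) none) ↔ (addLeaf G u).Adj none (some v) from
            ⟨SimpleGraph.Adj.symm, SimpleGraph.Adj.symm⟩, addLeaf_adj_none] at hadj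
          show Disjoint (c v) c₀
          rw [hadj, hpin]
          exact (Finset.disjoint_sdiff.mono_right hcu_sub).symm
        · exact hdisj ((addLeaf_adj_some G u v w).mp hadj)
  · intro hG' L hL v₀ c₀ hc₀ hcard
    obtain ⟨c, ⟨hsub, hcd, hdisj⟩, hpin⟩ :=
      hG' (fun x => x.elim (L u) L) (by rintro (_ | v) <;> exact hL _) (some v₀) c₀ hc₀ hcard
    exact ⟨fun v => c (some v), ⟨fun v => hsub (some v), fun v => hcd (some v),
      fun v w hadj => hdisj ((addLeaf_adj_some G u v w).mpr hadj)⟩, hpin⟩
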